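/- If Q, R are cubes with side lengths ℓ(R) = 2^i ℓ(Q), relative distance D(Q,R)/ℓ(R) ∼ 2^j (meaning 2^j < D(Q,R)/ℓ(R) ≤ 2^{j+1}), where i ≥ 1, j ≥ 0, and S has side length ℓ(S) = 2^{i+j+θ(j)} ℓ(Q) with θ(j) = ⌈(jγ+r)/(1-γ)⌉, and if mγ/(1-γ) ≤ α/4, then ℓ(Q)^α / D(Q,R)^{m+α} ≲ 2^{-α(i + 3j/4)} ℓ(S)^{-m}, with implied constant depending only on m, α, γ, r. -/

import Mathlib

/-- Lemma 4.1 (key geometric estimate), abstract form. Cubes are encoded by their side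
lengths `ℓQ`, `ℓR = 2^i ℓQ`, mutual distance `d ≥ 0`, `D = ℓQ + ℓR + d`, and
`ℓS = 2^{i+j+θ(j)} ℓQ` with `θ(j) = ⌈(jγ+r)/(1-γ)⌉`.  If `2^j < D/ℓR ≤ 2^{j+1}` and
`mγ/(1-γ) ≤ α/4` then `ℓQ^α / D^{m+α} ≲ 2^{-α(i+3j/4)} ℓS^{-m}`, the implied constant
depending only on `m, α, γ, r`. -/
theorem cube_distance_estimate (m α γ : ℝ) (r : ℕ) (hm : 0 < m) (hα : 0 < α)
    (hγ0 : 0 < γ) (hγ : γ < 1 / 2) (hr : 0 < r) (hγα : m * γ / (1 - γ) ≤ α / 4) :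
    ∃ C : ℝ, 0 < C ∧ ∀ (i j : ℕ) (ℓQ d : ℝ), 1 ≤ i → 0 < ℓQ → 0 ≤ d →
      (∀ ℓR D ℓS : ℝ, ℓR = 2 ^ i * ℓQ → D = ℓQ + ℓR + d →
        ℓS = 2 ^ ((i : ℝ) + j + ⌈((j : ℝ) * γ + r) / (1 - γ)⌉) * ℓQ →
        (2 : ℝ) ^ j < D / ℓR → D / ℓR ≤ 2 ^ (j + 1) →
        ℓQ ^ α / D ^ (m + α) ≤
          C * (2 : ℝ) ^ (-α * ((i : ℝ) + 3 * (j : ℝ) / 4)) * ℓS ^ (-m)) := by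
  have hγ1 : (0:ℝ) < 1 - γ := by linarith
  refine ⟨2 ^ (m * ((r : ℝ) / (1 - γ) + 1)), by positivity, ?_⟩
  intro i j ℓQ d hi hQ hd ℓR D ℓS hR hD hS h1 h2
  set θ : ℤ := ⌈((j : ℝ) * γ + r) / (1 - γ)⌉ with hθ
  have hθle : (θ : ℝ) ≤ ((j : ℝ) * γ + r) / (1 - γ) + 1 :=
    le_of_lt (Int.ceil_lt_add_one _)
  have hRpos : 0 < ℓR := by rw [hR]; positivity
  have hDlb : (2:ℝ) ^ ((i : ℝ) + j) * ℓQ ≤ D := by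
    have h1' : (2:ℝ) ^ j * ℓR ≤ D := by
      rw [lt_div_iff₀ hRpos] at h1; linarith
    calc (2:ℝ) ^ ((i : ℝ) + j) * ℓQ = 2 ^ j * ℓR := by
          rw [hR, Real.rpow_add (by norm_num), Real.rpow_natCast, Real.rpow_natCast]; ring
      _ ≤ D := h1'
  have hDpos : 0 < D := lt_of_lt_of_le (by positivity) hDlb
  set E : ℝ := (i : ℝ) + j with hE
  set F : ℝ := (i : ℝ) + j + θ with hF
  -- step 1: bound denominator
  have step1 : ℓQ ^ α / D ^ (m + α) ≤ ℓQ ^ α / ((2:ℝ) ^ E * ℓQ) ^ (m + α) := by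
    apply div_le_div_of_nonneg_left (by positivity) (by positivity)
    exact Real.rpow_le_rpow (by positivity) hDlb (by positivity)
  refine step1.trans ?_
  -- rewrite both sides as powers of 2 times ℓQ^(-m)
  have hQpow : ℓQ ^ α * (ℓQ ^ (m + α))⁻¹ = ℓQ ^ (-m) := by
    rw [← Real.rpow_neg (le_of_lt hQ), ← Real.rpow_add hQ]; congr 1; ring
  have hLHS : ℓQ ^ α / ((2:ℝ) ^ E * ℓQ) ^ (m + α)
      = (2:ℝ) ^ (-(E * (m + α))) * ℓQ ^ (-m) := by
    rw [Real.mul_rpow (by positivity) (le_of_lt hQ),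
      ← Real.rpow_mul (by norm_num : (0:ℝ) ≤ 2),
      div_eq_mul_inv, mul_inv, Real.rpow_neg (by norm_num : (0:ℝ) ≤ 2), ← hQpow]
    ring
  rw [hLHS, hS]
  have hRHS : ((2:ℝ) ^ F * ℓQ) ^ (-m) = (2:ℝ) ^ (F * (-m)) * ℓQ ^ (-m) := by
    rw [Real.mul_rpow (by positivity) (le_of_lt hQ), ← Real.rpow_mul (by norm_num)]
  rw [hRHS]
  have hkey : -(E * (m + α)) ≤ m * ((r : ℝ) / (1 - γ) + 1)
      + (-α * ((i : ℝ) + 3 * (j : ℝ) / 4)) + F * (-m) := by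
    have hj0 : (0:ℝ) ≤ (j : ℝ) := Nat.cast_nonneg j
    have h3 : (j : ℝ) * (m * γ / (1 - γ)) ≤ (j : ℝ) * (α / 4) :=
      mul_le_mul_of_nonneg_left hγα hj0
    have h4 : m * (((j : ℝ) * γ + r) / (1 - γ))
        = (j : ℝ) * (m * γ / (1 - γ)) + m * ((r : ℝ) / (1 - γ)) := by
      field_simp
    have h5 : m * (θ : ℝ) ≤ m * (((j : ℝ) * γ + r) / (1 - γ) + 1) :=
      mul_le_mul_of_nonneg_left hθle (le_of_lt hm)
    simp only [hE, hF]
    nlinarith [h3, h4, h5]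
  calc (2:ℝ) ^ (-(E * (m + α))) * ℓQ ^ (-m)
      ≤ (2:ℝ) ^ (m * ((r : ℝ) / (1 - γ) + 1) + (-α * ((i : ℝ) + 3 * (j : ℝ) / 4)) + F * (-m))
        * ℓQ ^ (-m) := by
        apply mul_le_mul_of_nonneg_right _ (by positivity)
        exact Real.rpow_le_rpow_of_exponent_le one_le_two hkey
    _ = 2 ^ (m * ((r : ℝ) / (1 - γ) + 1)) * (2:ℝ) ^ (-α * ((i : ℝ) + 3 * (j : ℝ) / 4))
        * ((2:ℝ) ^ (F * (-m)) * ℓQ ^ (-m)) := by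
        rw [Real.rpow_add (by norm_num), Real.rpow_add (by norm_num)]; ring
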